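/- Let 0 < α < 1, let S : [t₀,T] → (0,∞) be continuously differentiable, let g : (0,∞) → (0,∞) be continuous and monotone increasing, and fix S_ref > 0. Define V(t) = S(t) − S_ref − ∫_{S_ref}^{S(t)} g(S_ref)/g(X) dX. Then for every t ∈ (t₀,T], the Caputo derivative of V of order α based at t₀ satisfies ᶜD^α V(t) ≤ (1 − g(S_ref)/g(S(t))) · ᶜD^α S(t). -/

import Mathlib

/-- The Caputo fractional derivative of order `α` (0 < α < 1) based at `t₀`:
`ᶜD^α φ(t) = (1/Γ(1−α)) ∫_{t₀}^{t} φ′(x)(t−x)^{−α} dx`. -/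
noncomputable def caputo (α t₀ : ℝ) (φ : ℝ → ℝ) (t : ℝ) : ℝ :=
  (1 / Real.Gamma (1 - α)) * ∫ x in t₀..t, deriv φ x * (t - x) ^ (-α)

/- STATEMENT 4: Let 0 < α < 1, let S : [t₀,T] → (0,∞) be continuously differentiable,
let g : (0,∞) → (0,∞) be continuous and monotone increasing, and fix S_ref > 0.
Define V(t) = S(t) − S_ref − ∫_{S_ref}^{S(t)} g(S_ref)/g(X) dX. Then for every
t ∈ (t₀,T], ᶜD^α V(t) ≤ (1 − g(S_ref)/g(S(t))) · ᶜD^α S(t). -/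
open Set MeasureTheory intervalIntegral Filter in
private lemma caputo_key {a b α : ℝ} (hab : a < b) (hα0 : 0 < α) (hα1 : α < 1)
    (G G' : ℝ → ℝ)
    (hG : ∀ x ∈ Set.Icc a b, HasDerivWithinAt G (G' x) (Set.Icc a b) x)
    (hG'c : ContinuousOn G' (Set.Icc a b))
    (hGle : ∀ x ∈ Set.Icc a b, G x ≤ 0) (hGb : G b = 0) :
    0 ≤ ∫ x in a..b, G' x * (b - x) ^ (-α) := by
  obtain ⟨C, hC⟩ := (isCompact_Icc : IsCompact (Icc a b)).exists_bound_of_continuousOn hG'c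
  have hC0 : 0 ≤ C := le_trans (norm_nonneg _) (hC a (left_mem_Icc.2 hab.le))
  set w : ℝ → ℝ := fun x => (b - x) ^ (-α) with hw
  set w' : ℝ → ℝ := fun x => α * (b - x) ^ (-α - 1) with hw'
  -- integrability of w on any subinterval
  have hwint : ∀ c d : ℝ, IntervalIntegrable w volume c d := by
    intro c d
    have := (intervalIntegrable_rpow' (a := b - c) (b := b - d) (r := -α)
      (by linarith)).comp_sub_left b
    simpa [hw] using this
  have hGwint : ∀ c d, c ∈ Icc a b → d ∈ Icc a b →
      IntervalIntegrable (fun x => G' x * w x) volume c d := by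
    intro c d hc hd
    exact (hwint c d).continuousOn_mul (hG'c.mono (uIcc_subset_Icc hc hd))
  -- the main ε-estimate
  have hest : ∀ ε ∈ Ioo (0:ℝ) (b - a),
      -((C + C / (1 - α)) * ε ^ (1 - α)) ≤ ∫ x in a..b, G' x * w x := by
    intro ε hε
    obtain ⟨hε0, hεba⟩ := hε
    have hbε : a < b - ε := by linarith
    have hbεb : b - ε < b := by linarith
    have hbεmem : b - ε ∈ Icc a b := ⟨hbε.le, hbεb.le⟩
    -- IBP on [a, b-ε]
    have hwderiv : ∀ x ∈ Set.uIcc a (b - ε), HasDerivAt w (w' x) x := by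
      intro x hx
      rw [Set.uIcc_of_le hbε.le] at hx
      have hxb : x < b := lt_of_le_of_lt hx.2 hbεb
      have h1 : HasDerivAt (fun y : ℝ => b - y) (-1) x := by
        simpa using (hasDerivAt_id x).const_sub b
      have h2 := (Real.hasDerivAt_rpow_const (x := b - x) (p := -α)
        (Or.inl (by linarith [hxb] : b - x ≠ 0))).comp x h1
      refine h2.congr_deriv ?_
      simp only [hw']
      ring
    have ibp : ∫ x in a..(b - ε), G x * w' x
        = G (b - ε) * w (b - ε) - G a * w a - ∫ x in a..(b - ε), G' x * w x := by
      apply integral_mul_deriv_eq_deriv_mul_of_hasDerivWithinAt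
      · intro x hx
        exact (hG x (uIcc_subset_Icc (left_mem_Icc.2 hab.le) hbεmem hx)).mono
          (uIcc_subset_Icc (left_mem_Icc.2 hab.le) hbεmem)
      · intro x hx
        exact (hwderiv x hx).hasDerivWithinAt
      · exact (hG'c.mono (uIcc_subset_Icc (left_mem_Icc.2 hab.le) hbεmem)).intervalIntegrable
      · apply ContinuousOn.intervalIntegrable
        apply ContinuousOn.mul continuousOn_const
        apply ContinuousOn.rpow_const
        · exact (continuous_const.sub continuous_id).continuousOn
        · intro x hx
          rw [Set.uIcc_of_le hbε.le] at hx
          exact Or.inl (by linarith [hx.2] : b - x ≠ 0)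
    -- sign facts
    have hwa : 0 ≤ w a := Real.rpow_nonneg (by linarith) _
    have hterm1 : 0 ≤ -(G a * w a) := by
      have := hGle a (left_mem_Icc.2 hab.le)
      nlinarith
    have hterm2 : ∫ x in a..(b - ε), G x * w' x ≤ 0 := by
      have h0 : 0 ≤ ∫ x in a..(b - ε), -(G x * w' x) := by
        apply intervalIntegral.integral_nonneg hbε.le
        intro u hu
        have hu' : u ∈ Icc a b := ⟨hu.1, le_trans hu.2 hbεb.le⟩
        have h1 : G u ≤ 0 := hGle u hu'
        have h2 : 0 ≤ w' u := mul_nonneg hα0.le (Real.rpow_nonneg (by linarith [hu'.2]) _)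
        simpa using mul_nonneg (neg_nonneg.2 h1) h2
      rw [intervalIntegral.integral_neg] at h0
      linarith
    have hMVT : ‖G (b - ε) - G b‖ ≤ C * ‖(b - ε) - b‖ :=
      (convex_Icc a b).norm_image_sub_le_of_norm_hasDerivWithin_le hG hC
        (right_mem_Icc.2 hab.le) hbεmem
    have hGbε : -(C * ε) ≤ G (b - ε) := by
      rw [hGb, sub_zero] at hMVT
      have : ‖(b - ε) - b‖ = ε := by
        rw [show (b - ε) - b = -ε by ring, norm_neg, Real.norm_eq_abs, abs_of_pos hε0]
      rw [this] at hMVT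
      have := neg_le_of_abs_le hMVT
      linarith [this]
    have hwbε : w (b - ε) = ε ^ (-α) := by simp [hw]
    have hterm3 : -(C * ε ^ (1 - α)) ≤ G (b - ε) * w (b - ε) := by
      rw [hwbε]
      have hεα : (0:ℝ) ≤ ε ^ (-α) := Real.rpow_nonneg hε0.le _
      have h := mul_le_mul_of_nonneg_right hGbε hεα
      calc -(C * ε ^ (1 - α)) = -(C * ε) * ε ^ (-α) := by
            rw [show (1:ℝ) - α = 1 + (-α) by ring, Real.rpow_add hε0, Real.rpow_one]; ring
        _ ≤ G (b - ε) * ε ^ (-α) := h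
    have hI : -(C * ε ^ (1 - α)) ≤ ∫ x in a..(b - ε), G' x * w x := by
      have : ∫ x in a..(b - ε), G' x * w x
          = G (b - ε) * w (b - ε) - G a * w a - ∫ x in a..(b - ε), G x * w' x := by
        linarith [ibp]
      rw [this]
      linarith
    -- tail estimate
    have hwval : ∫ x in (b - ε)..b, w x = ε ^ (1 - α) / (1 - α) := by
      rw [hw]
      rw [intervalIntegral.integral_comp_sub_left (fun y => y ^ (-α)) b]
      rw [integral_rpow (Or.inl (by linarith))]
      rw [sub_self, sub_sub_cancel, Real.zero_rpow (by linarith : -α + 1 ≠ 0)]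
      rw [show -α + 1 = 1 - α by ring]
      ring
    have htail : ‖∫ x in (b - ε)..b, G' x * w x‖ ≤ C * (ε ^ (1 - α) / (1 - α)) := by
      have hb1 : ∀ᵐ t ∂(volume : Measure ℝ).restrict (Set.uIoc (b - ε) b), ‖G' t * w t‖ ≤ C * w t := by
        apply MeasureTheory.ae_restrict_of_forall_mem measurableSet_uIoc
        intro t ht
        rw [Set.uIoc_of_le hbεb.le] at ht
        have ht' : t ∈ Icc a b := ⟨le_trans hbε.le ht.1.le, ht.2⟩
        have hwt : 0 ≤ w t := Real.rpow_nonneg (by linarith [ht.2]) _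
        rw [norm_mul, Real.norm_eq_abs (w t), abs_of_nonneg hwt]
        exact mul_le_mul_of_nonneg_right (hC t ht') hwt
      have := intervalIntegral.norm_integral_le_abs_of_norm_le (g := fun t => C * w t)
        hb1 ((hwint (b - ε) b).const_mul C)
      rw [intervalIntegral.integral_const_mul, hwval] at this
      calc ‖∫ x in (b - ε)..b, G' x * w x‖ ≤ |C * (ε ^ (1 - α) / (1 - α))| := this
        _ = C * (ε ^ (1 - α) / (1 - α)) := abs_of_nonneg (mul_nonneg hC0 (div_nonneg (Real.rpow_nonneg hε0.le _) (by linarith)))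
    have hsplit : ∫ x in a..b, G' x * w x
        = (∫ x in a..(b - ε), G' x * w x) + ∫ x in (b - ε)..b, G' x * w x :=
      (intervalIntegral.integral_add_adjacent_intervals
        (hGwint a (b - ε) (left_mem_Icc.2 hab.le) hbεmem)
        (hGwint (b - ε) b hbεmem (right_mem_Icc.2 hab.le))).symm
    have htail' : -(C * (ε ^ (1 - α) / (1 - α))) ≤ ∫ x in (b - ε)..b, G' x * w x := by
      rw [Real.norm_eq_abs] at htail
      exact neg_le_of_abs_le htail
    rw [hsplit]
    have : C / (1 - α) * ε ^ (1 - α) = C * (ε ^ (1 - α) / (1 - α)) := by ring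
    nlinarith [hI, htail']
  -- limit as ε → 0⁺
  have hten : Tendsto (fun ε : ℝ => -((C + C / (1 - α)) * ε ^ (1 - α))) (nhdsWithin 0 (Ioi 0))
      (nhds 0) := by
    have h1 : ContinuousAt (fun ε : ℝ => ε ^ (1 - α)) 0 :=
      Real.continuousAt_rpow_const 0 (1 - α) (Or.inr (by linarith))
    have h2 : ContinuousAt (fun ε : ℝ => -((C + C / (1 - α)) * ε ^ (1 - α))) 0 :=
      ((continuousAt_const).mul h1).neg
    have h3 := h2.tendsto
    have h4 : -((C + C / (1 - α)) * (0:ℝ) ^ (1 - α)) = 0 := by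
      rw [Real.zero_rpow (by linarith : (1:ℝ) - α ≠ 0)]; ring
    rw [h4] at h3
    exact h3.mono_left nhdsWithin_le_nhds
  have hev : ∀ᶠ ε in nhdsWithin (0:ℝ) (Ioi 0),
      -((C + C / (1 - α)) * ε ^ (1 - α)) ≤ ∫ x in a..b, G' x * w x := by
    have hmem : Ioo (0:ℝ) (b - a) ∈ nhdsWithin (0:ℝ) (Ioi 0) :=
      Ioo_mem_nhdsGT_of_mem (Set.mem_Ico.2 ⟨le_refl 0, by linarith⟩)
    filter_upwards [hmem] with ε hε
    exact hest ε hε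
  exact le_of_tendsto hten hev

open Set MeasureTheory intervalIntegral Filter in
theorem stmt_4 (α t₀ T S_ref : ℝ) (hα0 : 0 < α) (hα1 : α < 1) (hT : t₀ < T)
    (hSref : 0 < S_ref)
    (S g : ℝ → ℝ)
    (hS : ContDiffOn ℝ 1 S (Set.Icc t₀ T))
    (hSpos : ∀ y ∈ Set.Icc t₀ T, 0 < S y)
    (hg_cont : ContinuousOn g (Set.Ioi 0))
    (hg_pos : ∀ x : ℝ, 0 < x → 0 < g x)
    (hg_mono : StrictMonoOn g (Set.Ioi 0)) :
    ∀ t ∈ Set.Ioc t₀ T,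
      caputo α t₀ (fun τ => S τ - S_ref - ∫ X in S_ref..S τ, g S_ref / g X) t
        ≤ (1 - g S_ref / g (S t)) * caputo α t₀ S t := by
  intro t ht
  obtain ⟨ht₀, htT⟩ := ht
  set c : ℝ := g S_ref with hc
  have hc0 : 0 < c := hg_pos _ hSref
  set f : ℝ → ℝ := fun X => c / g X with hf
  have hfcont : ContinuousOn f (Set.Ioi 0) :=
    continuousOn_const.div hg_cont (fun x hx => (hg_pos x hx).ne')
  set Φ : ℝ → ℝ := fun y => ∫ X in S_ref..y, f X with hΦdef
  -- interval integrability of f between positive points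
  have hfint : ∀ y z : ℝ, 0 < y → 0 < z → IntervalIntegrable f volume y z := by
    intro y z hy hz
    apply ContinuousOn.intervalIntegrable
    apply hfcont.mono
    intro X hX
    exact lt_of_lt_of_le (lt_min hy hz) hX.1
  -- Φ differentiable at positive points
  have hΦ : ∀ y : ℝ, 0 < y → HasDerivAt Φ (f y) y := by
    intro y hy
    apply intervalIntegral.integral_hasDerivAt_right (hfint _ _ hSref hy)
    · exact hfcont.stronglyMeasurableAtFilter isOpen_Ioi y hy
    · exact hfcont.continuousAt (isOpen_Ioi.mem_nhds hy)
  set r : ℝ → ℝ := fun x => c / g (S x) with hr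
  set S' : ℝ → ℝ := derivWithin S (Set.Icc t₀ T) with hS'
  have hS'cont : ContinuousOn S' (Set.Icc t₀ T) :=
    hS.continuousOn_derivWithin (uniqueDiffOn_Icc hT) le_rfl
  have hScont : ContinuousOn S (Set.Icc t₀ T) := hS.continuousOn
  have hsub : Set.Icc t₀ t ⊆ Set.Icc t₀ T := Set.Icc_subset_Icc le_rfl htT
  have hrcont : ContinuousOn r (Set.Icc t₀ T) := by
    apply continuousOn_const.div
    · exact hg_cont.comp hScont (fun x hx => hSpos x hx)
    · exact fun x hx => (hg_pos _ (hSpos x hx)).ne'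
  -- derivative of S within Icc
  have hSd : ∀ x ∈ Set.Icc t₀ T, HasDerivWithinAt S (S' x) (Set.Icc t₀ T) x := by
    intro x hx
    exact ((hS.differentiableOn one_ne_zero) x hx).hasDerivWithinAt
  set w : ℝ → ℝ := fun x => (t - x) ^ (-α) with hw
  have hwint : ∀ cc d : ℝ, IntervalIntegrable w volume cc d := by
    intro cc d
    have := (intervalIntegrable_rpow' (a := t - cc) (b := t - d) (r := -α)
      (by linarith)).comp_sub_left t
    simpa [hw] using this
  set G' : ℝ → ℝ := fun x => (r x - r t) * S' x with hG'
  have hG'cont : ContinuousOn G' (Set.Icc t₀ t) :=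
    (((hrcont.mono hsub).sub continuousOn_const).mul (hS'cont.mono hsub))
  set G : ℝ → ℝ := fun x => r t * (S t - S x) - (Φ (S t) - Φ (S x)) with hG
  have htmem : t ∈ Set.Icc t₀ T := ⟨ht₀.le, htT⟩
  have hStpos : 0 < S t := hSpos t htmem
  -- G derivative
  have hGd : ∀ x ∈ Set.Icc t₀ t, HasDerivWithinAt G (G' x) (Set.Icc t₀ t) x := by
    intro x hx
    have hx' : x ∈ Set.Icc t₀ T := hsub hx
    have h1 : HasDerivWithinAt S (S' x) (Set.Icc t₀ t) x := (hSd x hx').mono hsub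
    have h2 : HasDerivWithinAt (fun y => Φ (S y)) (f (S x) * S' x) (Set.Icc t₀ t) x :=
      (hΦ (S x) (hSpos x hx')).comp_hasDerivWithinAt x h1
    have h3 : HasDerivWithinAt (fun y => r t * (S t - S y) - (Φ (S t) - Φ (S y)))
        (r t * (0 - S' x) - (0 - f (S x) * S' x)) (Set.Icc t₀ t) x :=
      (((hasDerivWithinAt_const x _ (S t)).sub h1).const_mul (r t)).sub
        ((hasDerivWithinAt_const x _ (Φ (S t))).sub h2)
    convert h3 using 1
    simp only [hG', hr, hf]
    ring
  -- G ≤ 0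
  have hGle : ∀ x ∈ Set.Icc t₀ t, G x ≤ 0 := by
    intro x hx
    have hx' : x ∈ Set.Icc t₀ T := hsub hx
    have hSx : 0 < S x := hSpos x hx'
    have hint1 : IntervalIntegrable f volume S_ref (S t) := hfint _ _ hSref hStpos
    have hint2 : IntervalIntegrable f volume S_ref (S x) := hfint _ _ hSref hSx
    have hΦsub : Φ (S t) - Φ (S x) = ∫ X in (S x)..(S t), f X :=
      intervalIntegral.integral_interval_sub_left hint1 hint2
    have hconst : r t * (S t - S x) = ∫ X in (S x)..(S t), r t := by
      rw [intervalIntegral.integral_const]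
      simp [mul_comm]
    have hGx : G x = ∫ X in (S x)..(S t), (r t - f X) := by
      rw [hG]
      simp only
      rw [hΦsub, hconst, intervalIntegral.integral_sub intervalIntegrable_const
        (hfint _ _ hSx hStpos)]
    rw [hGx]
    have key : ∀ X ∈ Set.uIcc (S x) (S t), 0 < X := by
      intro X hX
      exact lt_of_lt_of_le (lt_min hSx hStpos) hX.1
    rcases le_total (S x) (S t) with hle | hle
    · have : ∀ X ∈ Set.Icc (S x) (S t), 0 ≤ -(r t - f X) := by
        intro X hX
        have hX0 : 0 < X := lt_of_lt_of_le hSx hX.1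
        have hgle : g X ≤ g (S t) := by
          rcases eq_or_lt_of_le hX.2 with h | h
          · rw [h]
          · exact (hg_mono hX0 hStpos h).le
        have : r t ≤ f X := by
          simp only [hr, hf]
          exact div_le_div_of_nonneg_left hc0.le (hg_pos _ hX0) hgle
        linarith
      have h0 : 0 ≤ ∫ X in (S x)..(S t), -(r t - f X) :=
        intervalIntegral.integral_nonneg hle this
      rw [intervalIntegral.integral_neg] at h0
      linarith
    · rw [intervalIntegral.integral_symm]
      have : ∀ X ∈ Set.Icc (S t) (S x), 0 ≤ r t - f X := by
        intro X hX
        have hX0 : 0 < X := lt_of_lt_of_le hStpos hX.1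
        have hgle : g (S t) ≤ g X := by
          rcases eq_or_lt_of_le hX.1 with h | h
          · rw [← h]
          · exact (hg_mono hStpos hX0 h).le
        have : f X ≤ r t := by
          simp only [hr, hf]
          exact div_le_div_of_nonneg_left hc0.le (hg_pos _ hStpos) hgle
        linarith
      have h0 : 0 ≤ ∫ X in (S t)..(S x), (r t - f X) :=
        intervalIntegral.integral_nonneg hle this
      linarith
  have hGb : G t = 0 := by simp [hG]
  -- key inequality
  have hkey : 0 ≤ ∫ x in t₀..t, G' x * w x :=
    caputo_key ht₀ hα0 hα1 G G' hGd hG'cont hGle hGb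
  -- a.e. rewriting of the caputo integrands
  have hae : ∀ᵐ x ∂(volume : Measure ℝ), x ∈ Set.Ioo t₀ t → True := by simp
  have hne : ∀ᵐ x ∂(volume : Measure ℝ), x ≠ t := by
    have h : (volume : Measure ℝ) {t} = 0 := measure_singleton t
    exact compl_mem_ae_iff.2 h
  have hderivS : ∀ x ∈ Set.Ioo t₀ t, deriv S x = S' x := by
    intro x hx
    have hx' : x ∈ Set.Ioo t₀ T := ⟨hx.1, lt_of_lt_of_le hx.2 htT⟩
    have hnh : Set.Icc t₀ T ∈ nhds x := Icc_mem_nhds hx'.1 hx'.2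
    rw [hS', derivWithin_of_mem_nhds hnh]
  have hVd : ∀ x ∈ Set.Ioo t₀ t,
      deriv (fun τ => S τ - S_ref - Φ (S τ)) x = (1 - r x) * S' x := by
    intro x hx
    have hx' : x ∈ Set.Ioo t₀ T := ⟨hx.1, lt_of_lt_of_le hx.2 htT⟩
    have hnh : Set.Icc t₀ T ∈ nhds x := Icc_mem_nhds hx'.1 hx'.2
    have hSx : HasDerivAt S (S' x) x := by
      have := (hSd x (Set.Ioo_subset_Icc_self hx')).hasDerivAt hnh
      exact this
    have h2 : HasDerivAt (fun y => Φ (S y)) (f (S x) * S' x) x :=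
      (hΦ (S x) (hSpos x (Set.Ioo_subset_Icc_self hx'))).comp x hSx
    have h3 : HasDerivAt (fun τ => S τ - S_ref - Φ (S τ))
        (S' x - f (S x) * S' x) x := (hSx.sub_const S_ref).sub h2
    rw [h3.deriv]
    simp only [hr, hf]
    ring
  have hIoc : ∀ᵐ x ∂(volume : Measure ℝ), x ∈ Set.uIoc t₀ t → x ∈ Set.Ioo t₀ t := by
    filter_upwards [hne] with x hx hxI
    rw [Set.uIoc_of_le ht₀.le] at hxI
    exact ⟨hxI.1, lt_of_le_of_ne hxI.2 hx⟩
  have hcongr1 : ∫ x in t₀..t, deriv S x * w x = ∫ x in t₀..t, S' x * w x := by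
    apply intervalIntegral.integral_congr_ae
    filter_upwards [hIoc] with x hx hxI
    rw [hderivS x (hx hxI)]
  have hcongr2 : ∫ x in t₀..t, deriv (fun τ => S τ - S_ref - ∫ X in S_ref..S τ, c / g X) x * w x
      = ∫ x in t₀..t, ((1 - r x) * S' x) * w x := by
    apply intervalIntegral.integral_congr_ae
    filter_upwards [hIoc] with x hx hxI
    rw [show (fun τ => S τ - S_ref - ∫ X in S_ref..S τ, c / g X)
      = (fun τ => S τ - S_ref - Φ (S τ)) from rfl]
    rw [hVd x (hx hxI)]
  -- integrability of pieces
  have hint1 : IntervalIntegrable (fun x => S' x * w x) volume t₀ t :=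
    (hwint t₀ t).continuousOn_mul ((hS'cont.mono hsub).mono (by
      rw [Set.uIcc_of_le ht₀.le]))
  have hint2 : IntervalIntegrable (fun x => ((1 - r x) * S' x) * w x) volume t₀ t :=
    (hwint t₀ t).continuousOn_mul (((continuousOn_const.sub (hrcont.mono hsub)).mul
      (hS'cont.mono hsub)).mono (by rw [Set.uIcc_of_le ht₀.le]))
  -- main integral inequality
  have hmain : ∫ x in t₀..t, ((1 - r x) * S' x) * w x
      ≤ (1 - r t) * ∫ x in t₀..t, S' x * w x := by
    have heq : (1 - r t) * (∫ x in t₀..t, S' x * w x)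
        - ∫ x in t₀..t, ((1 - r x) * S' x) * w x = ∫ x in t₀..t, G' x * w x := by
      rw [← intervalIntegral.integral_const_mul]
      rw [← intervalIntegral.integral_sub (hint1.const_mul _) hint2]
      apply intervalIntegral.integral_congr
      intro x hx
      simp only [hG']
      ring
    linarith [hkey, heq.symm ▸ hkey]
  -- conclude
  have hΓ : 0 < 1 / Real.Gamma (1 - α) := by
    have := Real.Gamma_pos_of_pos (by linarith : (0:ℝ) < 1 - α)
    positivity
  show (1 / Real.Gamma (1 - α)) * (∫ x in t₀..t,
      deriv (fun τ => S τ - S_ref - ∫ X in S_ref..S τ, g S_ref / g X) x * (t - x) ^ (-α))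
    ≤ (1 - g S_ref / g (S t)) * ((1 / Real.Gamma (1 - α)) * ∫ x in t₀..t,
      deriv S x * (t - x) ^ (-α))
  have hrw : (1 - g S_ref / g (S t)) * ((1 / Real.Gamma (1 - α)) * ∫ x in t₀..t,
      deriv S x * (t - x) ^ (-α))
      = (1 / Real.Gamma (1 - α)) * ((1 - r t) * ∫ x in t₀..t, deriv S x * (t - x) ^ (-α)) := by
    ring
  rw [hrw]
  apply mul_le_mul_of_nonneg_left _ hΓ.le
  calc ∫ x in t₀..t, deriv (fun τ => S τ - S_ref - ∫ X in S_ref..S τ, g S_ref / g X) x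
        * (t - x) ^ (-α)
      = ∫ x in t₀..t, ((1 - r x) * S' x) * w x := hcongr2
    _ ≤ (1 - r t) * ∫ x in t₀..t, S' x * w x := hmain
    _ = (1 - r t) * ∫ x in t₀..t, deriv S x * (t - x) ^ (-α) := by rw [hcongr1]
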